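/- If a, b, r are real numbers with a > b > r ≥ |z| for a complex number z, and λ ∈ [0,1], then |z/(b−z) − λ·z/(a−z)| ≤ r/(b−r) − λ·r/(a−r). -/

import Mathlib

theorem stmt0 (a b r lam : ℝ) (z : ℂ) (hab : a > b) (hbr : b > r)
    (hr : 0 < r) (hz : ‖z‖ ≤ r) (hlam : lam ∈ Set.Icc (0:ℝ) 1) :
    ‖z / ((b:ℂ) - z) - (lam:ℂ) * (z / ((a:ℂ) - z))‖ ≤
      r / (b - r) - lam * (r / (a - r)) := by
  obtain ⟨hl0, hl1⟩ := hlam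
  set s := ‖z‖ with hs
  have hs0 : 0 ≤ s := norm_nonneg z
  have ha0 : (0:ℝ) < a := by linarith
  have hb0 : (0:ℝ) < b := by linarith
  have hbr' : (0:ℝ) < b - r := by linarith
  have har' : (0:ℝ) < a - r := by linarith
  have h1 : b - s ≤ ‖(b:ℂ) - z‖ := by
    have := norm_sub_norm_le ((b:ℂ)) z
    simpa [Complex.norm_real, Real.norm_eq_abs, abs_of_pos hb0] using this
  have h2 : a - s ≤ ‖(a:ℂ) - z‖ := by
    have := norm_sub_norm_le ((a:ℂ)) z
    simpa [Complex.norm_real, Real.norm_eq_abs, abs_of_pos ha0] using this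
  have hbz : ((b:ℂ) - z) ≠ 0 := by
    intro h
    rw [h] at h1
    simp at h1
    linarith
  have haz : ((a:ℂ) - z) ≠ 0 := by
    intro h
    rw [h] at h2
    simp at h2
    linarith
  have hbzpos : 0 < ‖(b:ℂ) - z‖ := by
    simpa using norm_pos_iff.mpr hbz
  have hazpos : 0 < ‖(a:ℂ) - z‖ := by
    simpa using norm_pos_iff.mpr haz
  have key : z / ((b:ℂ) - z) - (lam:ℂ) * (z / ((a:ℂ) - z)) =
      (1 - (lam:ℂ)) * (z / ((b:ℂ) - z)) +
        (lam:ℂ) * (z * ((a:ℂ) - b) / (((b:ℂ) - z) * ((a:ℂ) - z))) := by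
    field_simp
    ring
  rw [key]
  have t1 : ‖(1 - (lam:ℂ)) * (z / ((b:ℂ) - z))‖ ≤ (1 - lam) * (s / (b - r)) := by
    rw [norm_mul, norm_div]
    have habs : ‖1 - (lam:ℂ)‖ = 1 - lam := by
      rw [show (1 - (lam:ℂ)) = ((1 - lam : ℝ) : ℂ) by push_cast; ring,
        Complex.norm_real, Real.norm_eq_abs, abs_of_nonneg (by linarith)]
    rw [habs]
    apply mul_le_mul_of_nonneg_left _ (by linarith)
    exact div_le_div₀ hs0 le_rfl hbr' (by linarith)
  have t2 : ‖(lam:ℂ) * (z * ((a:ℂ) - b) / (((b:ℂ) - z) * ((a:ℂ) - z)))‖ ≤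
      lam * (s * (a - b) / ((b - r) * (a - r))) := by
    rw [norm_mul, norm_div, norm_mul, norm_mul]
    have habs : ‖(lam:ℂ)‖ = lam := by
      rw [Complex.norm_real, Real.norm_eq_abs, abs_of_nonneg hl0]
    have habs2 : ‖(a:ℂ) - b‖ = a - b := by
      rw [show ((a:ℂ) - b) = ((a - b : ℝ) : ℂ) by push_cast; ring,
        Complex.norm_real, Real.norm_eq_abs, abs_of_nonneg (by linarith)]
    rw [habs, habs2]
    apply mul_le_mul_of_nonneg_left _ hl0
    apply div_le_div₀ (mul_nonneg hs0 (by linarith)) le_rfl (by positivity)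
    exact mul_le_mul (by linarith) (by linarith) (by linarith) (by positivity)
  have habsle := (norm_add_le ((1 - (lam:ℂ)) * (z / ((b:ℂ) - z)))
    ((lam:ℂ) * (z * ((a:ℂ) - b) / (((b:ℂ) - z) * ((a:ℂ) - z)))))
  have hsum : (1 - lam) * (s / (b - r)) + lam * (s * (a - b) / ((b - r) * (a - r))) ≤
      (1 - lam) * (r / (b - r)) + lam * (r * (a - b) / ((b - r) * (a - r))) := by
    gcongr <;> linarith
  have hfinal : (1 - lam) * (r / (b - r)) + lam * (r * (a - b) / ((b - r) * (a - r))) =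
      r / (b - r) - lam * (r / (a - r)) := by
    field_simp
    ring
  linarith
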